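/- Let E be the structure with domain ℕ × ℕ and a single binary relation ∼ defined by (a, b) ∼ (c, d) iff a = c (an equivalence relation with infinitely many infinite classes). Then: (1) E is indivisible: for every partition (C, D) of ℕ × ℕ there exists an injection f : ℕ × ℕ → C with f(x) ∼ f(y) ↔ x ∼ y for all x, y, or an injection f : ℕ × ℕ → D with the same property; (2) E does not have the galah property: there exists a partition (C, D) of ℕ × ℕ such that there is no bijection g : ℕ × ℕ → C with g(x) ∼ g(y) ↔ x ∼ y for all x, y, and no injection h : ℕ × ℕ → D with h(x) ∼ h(y) ↔ x ∼ y for all x, y. -/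
import Mathlib

lemma aux_copy (X : Set (ℕ × ℕ)) (S : Set ℕ) (hS : S.Infinite)
    (hT : ∀ a ∈ S, {b | (a, b) ∈ X}.Infinite) :
    ∃ f : ℕ × ℕ → ↥X, Function.Injective f ∧
      ∀ x y : ℕ × ℕ, ((f x : ℕ × ℕ).1 = (f y : ℕ × ℕ).1 ↔ x.1 = y.1) := by
  let e : ℕ ↪ S := hS.natEmbedding
  let g : ∀ n : ℕ, ℕ ↪ {b | ((e n : ℕ), b) ∈ X} :=
    fun n => (hT _ (e n).2).natEmbedding
  refine ⟨fun p => ⟨((e p.1 : ℕ), (g p.1 p.2 : ℕ)), (g p.1 p.2).2⟩, ?_, ?_⟩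
  · rintro ⟨a, b⟩ ⟨a', b'⟩ h
    simp only [Subtype.mk.injEq, Prod.mk.injEq] at h
    obtain ⟨h1, h2⟩ := h
    have ha : a = a' := e.injective (Subtype.ext h1)
    subst ha
    have hb : b = b' := (g a).injective (Subtype.ext h2)
    subst hb; rfl
  · intro x y
    constructor
    · intro h
      exact e.injective (Subtype.ext h)
    · intro h
      simp [h]

theorem statement7 :
    (∀ C : Set (ℕ × ℕ),
      (∃ f : ℕ × ℕ → ↥C, Function.Injective f ∧
        ∀ x y : ℕ × ℕ, ((f x : ℕ × ℕ).1 = (f y : ℕ × ℕ).1 ↔ x.1 = y.1)) ∨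
      (∃ f : ℕ × ℕ → ↥(Cᶜ), Function.Injective f ∧
        ∀ x y : ℕ × ℕ, ((f x : ℕ × ℕ).1 = (f y : ℕ × ℕ).1 ↔ x.1 = y.1))) ∧
    (∃ C : Set (ℕ × ℕ),
      (¬ ∃ g : ℕ × ℕ → ↥C, Function.Bijective g ∧
        ∀ x y : ℕ × ℕ, ((g x : ℕ × ℕ).1 = (g y : ℕ × ℕ).1 ↔ x.1 = y.1)) ∧
      (¬ ∃ h : ℕ × ℕ → ↥(Cᶜ), Function.Injective h ∧
        ∀ x y : ℕ × ℕ, ((h x : ℕ × ℕ).1 = (h y : ℕ × ℕ).1 ↔ x.1 = y.1))) := by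
  constructor
  · intro C
    set S : Set ℕ := {a | {b | (a, b) ∈ C}.Infinite} with hSdef
    by_cases hS : S.Infinite
    · exact Or.inl (aux_copy C S hS (fun a ha => ha))
    · right
      apply aux_copy (Cᶜ) Sᶜ
      · rw [Set.not_infinite] at hS
        exact hS.infinite_compl
      · intro a ha
        have hfin : {b | (a, b) ∈ C}.Finite := Set.not_infinite.mp ha
        have : {b | (a, b) ∈ Cᶜ} = {b | (a, b) ∈ C}ᶜ := rfl
        rw [this]
        exact hfin.infinite_compl
  · refine ⟨{p | 2 ≤ p.1 ∨ p = (1, 0)}, ?_, ?_⟩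
    · rintro ⟨g, ⟨ginj, gsurj⟩, gprop⟩
      have hmem : ((1, 0) : ℕ × ℕ) ∈ {p : ℕ × ℕ | 2 ≤ p.1 ∨ p = (1, 0)} := Or.inr rfl
      obtain ⟨⟨a, b⟩, hab⟩ := gsurj ⟨(1, 0), hmem⟩
      have h1 : (g (a, b + 1) : ℕ × ℕ).1 = (g (a, b) : ℕ × ℕ).1 :=
        (gprop (a, b + 1) (a, b)).mpr rfl
      rw [hab] at h1
      have h1' : (g (a, b + 1) : ℕ × ℕ).1 = 1 := h1
      have h2 := (g (a, b + 1)).2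
      simp only [Set.mem_setOf_eq] at h2
      have h3 : (g (a, b + 1) : ℕ × ℕ) = (1, 0) := by
        rcases h2 with h2 | h2
        · omega
        · exact h2
      have h4 : g (a, b + 1) = g (a, b) := by
        rw [hab]; exact Subtype.ext h3
      have := ginj h4
      simp at this
    · rintro ⟨h, hinj, hprop⟩
      have hle : ∀ p : ℕ × ℕ, (h p : ℕ × ℕ).1 ≤ 1 := by
        intro p
        have := (h p).2
        simp only [Set.mem_compl_iff, Set.mem_setOf_eq, not_or] at this
        omega
      have d01 : (h (0, 0) : ℕ × ℕ).1 ≠ (h (1, 0) : ℕ × ℕ).1 := by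
        intro hh; have := (hprop (0, 0) (1, 0)).mp hh; simp at this
      have d02 : (h (0, 0) : ℕ × ℕ).1 ≠ (h (2, 0) : ℕ × ℕ).1 := by
        intro hh; have := (hprop (0, 0) (2, 0)).mp hh; simp at this
      have d12 : (h (1, 0) : ℕ × ℕ).1 ≠ (h (2, 0) : ℕ × ℕ).1 := by
        intro hh; have := (hprop (1, 0) (2, 0)).mp hh; simp at this
      have := hle (0, 0); have := hle (1, 0); have := hle (2, 0)
      omega
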